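/- arXiv:2510.24091 — 4 statements merged into one kernel-verified Lean document; each statement's English description precedes it below -/
import Mathlib

section
/- The set of admissible mirrors on $\mathcal{P}$, i.e. bijections $\pi : \mathcal{P} \to \mathcal{P}$ satisfying the reversibility condition $\pi(-\pi(p)) = -p$ for all $p$ and the no-U-turn condition $\pi(p) \neq -p$ for all $p$, has cardinality $(2d-1)!! = 1\cdot 3\cdot 5\cdots(2d-1)$. -/
open Equiv

/-- Extend an involution on the complement of `{a,b}` by the swap `a ↔ b`. -/
def extFun {α : Type} [DecidableEq α] (a b : α)
    (τ : Equiv.Perm {y : α // y ≠ a ∧ y ≠ b}) (x : α) : α :=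
  if hx : x = a then b else if hx' : x = b then a else (τ ⟨x, hx, hx'⟩).1

lemma extFun_invol {α : Type} [DecidableEq α] {a b : α} (hab : b ≠ a)
    (τ : Equiv.Perm {y : α // y ≠ a ∧ y ≠ b}) (hτ : Function.Involutive τ) :
    Function.Involutive (extFun a b τ) := by
  intro x
  by_cases hx : x = a
  · subst hx; simp [extFun, hab]
  · by_cases hx' : x = b
    · subst hx'; simp [extFun, hab, Ne.symm hab]
    · have h1 := (τ ⟨x, hx, hx'⟩).2.1
      have h2 := (τ ⟨x, hx, hx'⟩).2.2
      simp only [extFun, dif_neg hx, dif_neg hx', dif_neg h1, dif_neg h2]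
      rw [Subtype.coe_eta, hτ]

def fiber_equiv {α : Type} [DecidableEq α] (a b : α) (hab : b ≠ a) :
    {τ : Equiv.Perm α // (Function.Involutive τ ∧ ∀ x, τ x ≠ x) ∧ τ a = b} ≃
    {τ : Equiv.Perm {y : α // y ≠ a ∧ y ≠ b} //
      Function.Involutive τ ∧ ∀ x, τ x ≠ x} where
  toFun := fun ⟨τ, ⟨hinv, hfpf⟩, hab'⟩ => by
    have hba : τ b = a := by rw [← hab']; exact hinv a
    have hmem : ∀ y : {y : α // y ≠ a ∧ y ≠ b}, τ y.1 ≠ a ∧ τ y.1 ≠ b := by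
      intro y
      constructor
      · intro h; exact y.2.2 (τ.injective (h.trans hba.symm))
      · intro h; exact y.2.1 (τ.injective (h.trans hab'.symm))
    have hinv' : Function.Involutive
        (fun y : {y : α // y ≠ a ∧ y ≠ b} => (⟨τ y.1, hmem y⟩ : {y : α // y ≠ a ∧ y ≠ b})) :=
      fun y => Subtype.ext (hinv y.1)
    refine ⟨hinv'.toPerm, ?_, ?_⟩
    · rw [Function.Involutive.coe_toPerm]; exact hinv'
    · rw [Function.Involutive.coe_toPerm]
      exact fun y hy => hfpf y.1 (congrArg Subtype.val hy)
  invFun := fun ⟨τ, hinv, hfpf⟩ => by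
    refine ⟨Function.Involutive.toPerm (extFun a b τ) (extFun_invol hab τ hinv),
      ⟨extFun_invol hab τ hinv, ?_⟩, ?_⟩
    · intro x hx
      by_cases h1 : x = a
      · subst h1; rw [Function.Involutive.coe_toPerm, extFun, dif_pos rfl] at hx
        exact hab hx
      · by_cases h2 : x = b
        · subst h2
          rw [Function.Involutive.coe_toPerm, extFun, dif_neg hab,
            dif_pos rfl] at hx
          exact hab hx.symm
        · rw [Function.Involutive.coe_toPerm, extFun, dif_neg h1, dif_neg h2] at hx
          exact hfpf ⟨x, h1, h2⟩ (Subtype.ext hx)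
    · rw [Function.Involutive.coe_toPerm, extFun, dif_pos rfl]
  left_inv := fun ⟨τ, ⟨hinv, hfpf⟩, hab'⟩ => by
    have hba : τ b = a := by rw [← hab']; exact hinv a
    apply Subtype.ext
    apply Equiv.ext
    intro x
    simp only [Function.Involutive.coe_toPerm, extFun]
    by_cases h1 : x = a
    · subst h1; rw [dif_pos rfl, hab']
    · by_cases h2 : x = b
      · subst h2; rw [dif_neg h1, dif_pos rfl, hba]
      · rw [dif_neg h1, dif_neg h2]; rfl
  right_inv := fun ⟨τ, hinv, hfpf⟩ => by
    apply Subtype.ext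
    apply Equiv.ext
    intro y
    apply Subtype.ext
    simp only [Function.Involutive.coe_toPerm, extFun, dif_neg y.2.1, dif_neg y.2.2,
      Subtype.coe_eta]

lemma card_fpf_invol : ∀ (n : ℕ) (α : Type) [Fintype α] [DecidableEq α],
    Fintype.card α = 2 * n →
    Nat.card {τ : Equiv.Perm α // Function.Involutive τ ∧ ∀ x, τ x ≠ x} =
      Nat.doubleFactorial (2 * n - 1) := by
  intro n
  induction n with
  | zero =>
    intro α _ _ hcard
    haveI : IsEmpty α := Fintype.card_eq_zero_iff.mp (by omega)
    rw [show (2 * 0 - 1 : ℕ).doubleFactorial = 1 from rfl, Nat.card_eq_one_iff_unique]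
    constructor
    · constructor
      intro ⟨τ, _⟩ ⟨τ', _⟩
      exact Subtype.ext (Equiv.ext fun x => (IsEmpty.false x).elim)
    · exact ⟨⟨1, fun x => (IsEmpty.false x).elim, fun x => (IsEmpty.false x).elim⟩⟩
  | succ n ih =>
    intro α _ _ hcard
    classical
    have hne : Nonempty α := Fintype.card_pos_iff.mp (by omega)
    obtain ⟨a⟩ := hne
    -- fibration over the value at a
    have e1 : {τ : Equiv.Perm α // Function.Involutive τ ∧ ∀ x, τ x ≠ x} ≃
        Σ b : {b : α // b ≠ a},
          {τ : {τ : Equiv.Perm α // Function.Involutive τ ∧ ∀ x, τ x ≠ x} //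
            τ.1 a = b.1} :=
      (Equiv.sigmaFiberEquiv
        (fun τ : {τ : Equiv.Perm α // Function.Involutive τ ∧ ∀ x, τ x ≠ x} =>
          (⟨τ.1 a, τ.2.2 a⟩ : {b : α // b ≠ a}))).symm.trans
        (Equiv.sigmaCongrRight fun b =>
          Equiv.subtypeEquivRight fun τ => by
            constructor
            · intro h; exact congrArg Subtype.val h
            · intro h; exact Subtype.ext h)
    rw [Nat.card_congr e1, Nat.card_eq_fintype_card, Fintype.card_sigma]
    simp_rw [← Nat.card_eq_fintype_card]
    have hfib : ∀ b : {b : α // b ≠ a},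
        Nat.card {τ : {τ : Equiv.Perm α // Function.Involutive τ ∧ ∀ x, τ x ≠ x} //
            τ.1 a = b.1} = Nat.doubleFactorial (2 * n - 1) := by
      intro b
      have e2 : {τ : {τ : Equiv.Perm α // Function.Involutive τ ∧ ∀ x, τ x ≠ x} //
            τ.1 a = b.1} ≃
          {τ : Equiv.Perm α // (Function.Involutive τ ∧ ∀ x, τ x ≠ x) ∧ τ a = b.1} :=
        Equiv.subtypeSubtypeEquivSubtypeInter
          (fun τ : Equiv.Perm α => Function.Involutive τ ∧ ∀ x, τ x ≠ x)
          (fun τ => τ a = b.1)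
      have hb : (b : α) ≠ a := b.2
      rw [Nat.card_congr (e2.trans (fiber_equiv a b.1 hb))]
      apply ih
      rw [Fintype.card_subtype]
      have hfilt : Finset.filter (fun y => y ≠ a ∧ y ≠ (b : α)) Finset.univ =
          Finset.univ \ {a, (b : α)} := by
        ext y; simp [not_or]
      rw [hfilt, Finset.card_sdiff_of_subset (by simp), Finset.card_univ, hcard,
        Finset.card_pair (Ne.symm hb)]
      omega
    rw [Finset.sum_congr rfl (fun b _ => hfib b), Finset.sum_const, smul_eq_mul]
    have hcb : Fintype.card {b : α // b ≠ a} = 2 * n + 1 := by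
      have : Fintype.card {b : α // b ≠ a} = Fintype.card α - 1 := by
        simp [Fintype.card_subtype_compl]
      omega
    rw [Finset.card_univ, hcb]
    cases n with
    | zero => simp [Nat.doubleFactorial]
    | succ m =>
      have h1 : 2 * (m + 1 + 1) - 1 = (2 * (m + 1) - 1) + 2 := by omega
      have h2 : 2 * (m + 1) + 1 = (2 * (m + 1) - 1) + 2 := by omega
      rw [h1, h2, Nat.doubleFactorial]




/-- The velocity set `𝒫 = {±e₁, …, ±e_d} ⊆ ℤ^d`. -/
def velocitySet (d : ℕ) : Finset (Fin d → ℤ) :=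
  (Finset.univ.image fun i : Fin d => Pi.single i (1 : ℤ)) ∪
    (Finset.univ.image fun i : Fin d => -Pi.single i (1 : ℤ))

/-- An admissible mirror: a bijection `π` of `𝒫` satisfying the reversibility
condition `π(-π(p)) = -p` (phrased via the element `q ∈ 𝒫` with `q = -π(p)`)
and the no-U-turn condition `π(p) ≠ -p`. -/
def IsAdmissibleMirror {d : ℕ}
    (π : {v // v ∈ velocitySet d} ≃ {v // v ∈ velocitySet d}) : Prop :=
  (∀ p q : {v // v ∈ velocitySet d},
      (q : Fin d → ℤ) = -(π p : Fin d → ℤ) → (π q : Fin d → ℤ) = -(p : Fin d → ℤ)) ∧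
    ∀ p : {v // v ∈ velocitySet d}, (π p : Fin d → ℤ) ≠ -(p : Fin d → ℤ)

lemma neg_mem_velocitySet {d : ℕ} {v : Fin d → ℤ} (h : v ∈ velocitySet d) :
    -v ∈ velocitySet d := by
  simp only [velocitySet, Finset.mem_union, Finset.mem_image, Finset.mem_univ,
    true_and] at h ⊢
  rcases h with ⟨i, hi⟩ | ⟨i, hi⟩
  · exact Or.inr ⟨i, by rw [hi]⟩
  · exact Or.inl ⟨i, by rw [← hi, neg_neg]⟩

/-- Negation as an equivalence of the velocity set. -/
def negVel (d : ℕ) : {v // v ∈ velocitySet d} ≃ {v // v ∈ velocitySet d} where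
  toFun p := ⟨-p.1, neg_mem_velocitySet p.2⟩
  invFun p := ⟨-p.1, neg_mem_velocitySet p.2⟩
  left_inv p := by simp
  right_inv p := by simp

lemma card_velocitySet (d : ℕ) : (velocitySet d).card = 2 * d := by
  have inj1 : Function.Injective fun i : Fin d => Pi.single i (1 : ℤ) := by
    intro i j hij
    by_contra hne
    have h := congrFun hij i
    simp only [Pi.single_eq_same, Pi.single_eq_of_ne hne] at h
    exact one_ne_zero h
  have inj2 : Function.Injective fun i : Fin d => -Pi.single i (1 : ℤ) := by
    intro i j hij
    exact inj1 (neg_injective hij)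
  have hdisj : Disjoint (Finset.univ.image fun i : Fin d => Pi.single i (1 : ℤ))
      (Finset.univ.image fun i : Fin d => -Pi.single i (1 : ℤ)) := by
    rw [Finset.disjoint_left]
    rintro v hv hv'
    simp only [Finset.mem_image, Finset.mem_univ, true_and] at hv hv'
    obtain ⟨i, rfl⟩ := hv
    obtain ⟨j, hj⟩ := hv'
    have h := congrFun hj i
    by_cases hij : i = j
    · subst hij
      simp only [Pi.neg_apply, Pi.single_eq_same] at h
      omega
    · simp only [Pi.neg_apply, Pi.single_eq_same,
        Pi.single_eq_of_ne hij, neg_zero] at h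
      omega
  rw [velocitySet, Finset.card_union_of_disjoint hdisj,
    Finset.card_image_of_injective _ inj1, Finset.card_image_of_injective _ inj2,
    Finset.card_univ, Fintype.card_fin]
  omega

/-- Admissible mirrors correspond to fixed-point-free involutions. -/
def mirrorEquivInvol (d : ℕ) :
    {π : {v // v ∈ velocitySet d} ≃ {v // v ∈ velocitySet d} // IsAdmissibleMirror π} ≃
    {τ : Equiv.Perm {v // v ∈ velocitySet d} //
      Function.Involutive τ ∧ ∀ p, τ p ≠ p} where
  toFun π := ⟨π.1.trans (negVel d), by
    obtain ⟨π, h1, h2⟩ := π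
    constructor
    · intro p
      apply Subtype.ext
      have hq : ((negVel d (π p) : {v // v ∈ velocitySet d}) : Fin d → ℤ)
          = -(π p : Fin d → ℤ) := rfl
      have h := h1 p (negVel d (π p)) hq
      show -((π ((negVel d) (π p)) : {v // v ∈ velocitySet d}) : Fin d → ℤ)
          = (p : Fin d → ℤ)
      rw [h, neg_neg]
    · intro p hp
      apply h2 p
      have h : -((π p : {v // v ∈ velocitySet d}) : Fin d → ℤ) = (p : Fin d → ℤ) :=
        congrArg Subtype.val hp
      rw [← h, neg_neg]⟩
  invFun τ := ⟨τ.1.trans (negVel d), by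
    obtain ⟨τ, hinv, hfpf⟩ := τ
    constructor
    · intro p q hq
      have hq' : q = τ p := by
        apply Subtype.ext
        have : ((q : Fin d → ℤ)) = -(-((τ p : {v // v ∈ velocitySet d}) : Fin d → ℤ)) := hq
        rw [this, neg_neg]
      subst hq'
      show -((τ (τ p) : {v // v ∈ velocitySet d}) : Fin d → ℤ) = -(p : Fin d → ℤ)
      rw [hinv p]
    · intro p hp
      apply hfpf p
      apply Subtype.ext
      have h : -((τ p : {v // v ∈ velocitySet d}) : Fin d → ℤ) = -(p : Fin d → ℤ) := hp
      exact neg_injective h⟩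
  left_inv π := by
    apply Subtype.ext
    apply Equiv.ext
    intro p
    apply Subtype.ext
    exact neg_neg _
  right_inv τ := by
    apply Subtype.ext
    apply Equiv.ext
    intro p
    apply Subtype.ext
    exact neg_neg _

/-- The number of admissible mirrors on `𝒫 = {±e₁, …, ±e_d}` is the double
factorial `(2d-1)!! = 1·3·5⋯(2d-1)`. -/
theorem card_admissible_mirrors (d : ℕ) (hd : 1 ≤ d) :
    Nat.card {π : {v // v ∈ velocitySet d} ≃ {v // v ∈ velocitySet d} //
        IsAdmissibleMirror π} = Nat.doubleFactorial (2 * d - 1) := by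
  rw [Nat.card_congr (mirrorEquivInvol d)]
  apply card_fpf_invol d
  rw [Fintype.card_coe]
  exact card_velocitySet d
end

section
/- For every mirror configuration $\pi$ and every $x \in I_N$, there exists $n$ with $1 \le n \le 2d\,|\Lambda_N|$ such that $F^n(x;\pi) \in O_N$ (where all intermediate iterates lie in $\mathcal{M}_N$). In particular the exit time $n_x = \inf\{n \ge 1 : F^n(x;\pi) \in O_N\}$ is finite and at most $2d\,|\Lambda_N| = 2d\,N M^{d-1}$. -/
/-- Position space `X = ℤ × (ℤ/Mℤ)^{d-1}`: an unbounded slab coordinate and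
`d-1` periodic transverse coordinates. -/
abbrev MirrorPos (d M : ℕ) := ℤ × (Fin (d - 1) → ZMod M)

/-- Velocity set `𝒫 = {±e₁, …, ±e_d}`: `(none, s)` is `±e₁` (the slab
direction) and `(some j, s)` is `±e_{j+2}` (a transverse direction), with the
sign recorded by the boolean `s`. -/
abbrev MirrorVel (d : ℕ) := Option (Fin (d - 1)) × Bool

/-- Negation of a velocity. -/
def velNeg {d : ℕ} (v : MirrorVel d) : MirrorVel d := (v.1, !v.2)

/-- The sign `±1` attached to a boolean. -/
def bsign (b : Bool) : ℤ := if b then 1 else -1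

/-- Translation of a position by a velocity: `±e₁` shifts the slab coordinate,
a transverse velocity shifts the corresponding periodic coordinate. -/
def velMove {d M : ℕ} (q : MirrorPos d M) (v : MirrorVel d) : MirrorPos d M :=
  match v.1 with
  | none => (q.1 + bsign v.2, q.2)
  | some j => (q.1, Function.update q.2 j (q.2 j + (bsign v.2 : ZMod M)))

/-- The slab `Λ_N = {1,…,N} × (ℤ/Mℤ)^{d-1}`. -/
def slab (d M N : ℕ) : Set (MirrorPos d M) := {q | 1 ≤ q.1 ∧ q.1 ≤ (N : ℤ)}

/-- The phase space `ℳ_N = Λ_N × 𝒫`. -/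
def phaseSpace (d M N : ℕ) : Set (MirrorPos d M × MirrorVel d) :=
  {x | x.1 ∈ slab d M N}

/-- The velocity `e₁`. -/
def velPlus (d : ℕ) : MirrorVel d := (none, true)

/-- The velocity `-e₁`. -/
def velMinus (d : ℕ) : MirrorVel d := (none, false)

/-- Incoming boundary `I⁺_N = {(q, e₁) : q₁ = 1}`. -/
def inPlus (d M N : ℕ) : Set (MirrorPos d M × MirrorVel d) :=
  {x | x.1.1 = 1 ∧ x.2 = velPlus d}

/-- Incoming boundary `I⁻_N = {(q, -e₁) : q₁ = N}`. -/
def inMinus (d M N : ℕ) : Set (MirrorPos d M × MirrorVel d) :=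
  {x | x.1.1 = (N : ℤ) ∧ x.2 = velMinus d}

/-- Outgoing boundary `O⁺_N = {(q + e₁, e₁) : q₁ = N}`. -/
def outPlus (d M N : ℕ) : Set (MirrorPos d M × MirrorVel d) :=
  {x | x.1.1 = (N : ℤ) + 1 ∧ x.2 = velPlus d}

/-- Outgoing boundary `O⁻_N = {(q - e₁, -e₁) : q₁ = 1}`. -/
def outMinus (d M N : ℕ) : Set (MirrorPos d M × MirrorVel d) :=
  {x | x.1.1 = 0 ∧ x.2 = velMinus d}

/-- A mirror configuration: at each site of the slab, a bijection of the
velocity set satisfying the reversibility condition `π(q; -π(q;p)) = -p` and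
the no-U-turn condition `π(q;p) ≠ -p`. -/
def IsMirrorConfig (d M N : ℕ) (π : MirrorPos d M → (MirrorVel d ≃ MirrorVel d)) : Prop :=
  ∀ q ∈ slab d M N,
    (∀ p, π q (velNeg (π q p)) = velNeg p) ∧ ∀ p, π q p ≠ velNeg p

/-- The mirrors dynamics `F(q,p;π) = (q + π(q;p), π(q;p))`. -/
def mirrorF {d M : ℕ} (π : MirrorPos d M → (MirrorVel d ≃ MirrorVel d))
    (x : MirrorPos d M × MirrorVel d) : MirrorPos d M × MirrorVel d :=
  (velMove x.1 (π x.1 x.2), π x.1 x.2)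

/-- The exit time `n_x = inf {n ≥ 1 : Fⁿ(x;π) ∈ O_N}`. -/
noncomputable def exitTime {d M : ℕ} (N : ℕ)
    (π : MirrorPos d M → (MirrorVel d ≃ MirrorVel d))
    (x : MirrorPos d M × MirrorVel d) : ℕ :=
  sInf {n | 1 ≤ n ∧ (mirrorF π)^[n] x ∈ outPlus d M N ∪ outMinus d M N}

/-- The exit map `F_N(x;π) = F^{n_x}(x;π)`. -/
noncomputable def mirrorFN {d M : ℕ} (N : ℕ)
    (π : MirrorPos d M → (MirrorVel d ≃ MirrorVel d))
    (x : MirrorPos d M × MirrorVel d) : MirrorPos d M × MirrorVel d :=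
  (mirrorF π)^[exitTime N π x] x


lemma bsign_true : bsign true = 1 := rfl

lemma bsign_false : bsign false = -1 := rfl

lemma velMove_none {d M : ℕ} (q : MirrorPos d M) (b : Bool) :
    velMove q (((none : Option (Fin (d - 1))), b) : MirrorVel d) = (q.1 + bsign b, q.2) := rfl

lemma velMove_some {d M : ℕ} (q : MirrorPos d M) (j : Fin (d - 1)) (b : Bool) :
    velMove q ((some j, b) : MirrorVel d) =
      (q.1, Function.update q.2 j (q.2 j + (bsign b : ZMod M))) := rfl

lemma velMove_inj {d M : ℕ} (v : MirrorVel d) :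
    Function.Injective (fun q : MirrorPos d M => velMove q v) := by
  intro a b h
  obtain ⟨o, s⟩ := v
  cases o with
  | none =>
    simp only [velMove, Prod.mk.injEq] at h
    obtain ⟨h1, h2⟩ := h
    exact Prod.ext (by omega) h2
  | some j =>
    simp only [velMove, Prod.mk.injEq] at h
    obtain ⟨h1, h2⟩ := h
    refine Prod.ext h1 (funext fun i => ?_)
    by_cases hij : i = j
    · subst hij
      have := congrFun h2 i
      simpa using this
    · have := congrFun h2 i
      simpa [Function.update_of_ne hij] using this

lemma mirrorF_inj {d M : ℕ} (π : MirrorPos d M → (MirrorVel d ≃ MirrorVel d)) :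
    Function.Injective (mirrorF π) := by
  intro a b h
  have hv : π a.1 a.2 = π b.1 b.2 := congrArg Prod.snd h
  have hq : velMove a.1 (π a.1 a.2) = velMove b.1 (π b.1 b.2) := congrArg Prod.fst h
  rw [hv] at hq
  have h1 : a.1 = b.1 := velMove_inj _ hq
  rw [h1] at hv
  exact Prod.ext h1 ((π b.1).injective hv)

/-- For every mirror configuration `π` and every `x ∈ I_N`, there exists
`n` with `1 ≤ n ≤ 2d|Λ_N| = 2d N M^{d-1}` such that `Fⁿ(x;π) ∈ O_N`, all the
intermediate iterates lying in `ℳ_N`. In particular the exit time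
`n_x = inf {n ≥ 1 : Fⁿ(x;π) ∈ O_N}` is finite (the infimum is attained) and at
most `2d N M^{d-1}`. -/
theorem mirrors_exit_time_bound (d M N : ℕ) (hd : 2 ≤ d) (hM : 1 ≤ M) (hN : 1 ≤ N)
    (π : MirrorPos d M → (MirrorVel d ≃ MirrorVel d))
    (hπ : IsMirrorConfig d M N π)
    (x : MirrorPos d M × MirrorVel d) (hx : x ∈ inPlus d M N ∪ inMinus d M N) :
    (∃ n, 1 ≤ n ∧ n ≤ 2 * d * N * M ^ (d - 1) ∧
      (mirrorF π)^[n] x ∈ outPlus d M N ∪ outMinus d M N ∧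
      ∀ k < n, (mirrorF π)^[k] x ∈ phaseSpace d M N) ∧
    1 ≤ exitTime N π x ∧ exitTime N π x ≤ 2 * d * N * M ^ (d - 1) ∧
      (mirrorF π)^[exitTime N π x] x ∈ outPlus d M N ∪ outMinus d M N := by
  classical
  haveI : NeZero M := ⟨by omega⟩
  set K := 2 * d * N * M ^ (d - 1) with hKdef
  have hx0 : x ∈ phaseSpace d M N := by
    rcases hx with h | h
    · exact ⟨by simp [h.1], by rw [h.1]; exact_mod_cast hN⟩
    · exact ⟨by rw [h.1]; exact_mod_cast hN, by simp [h.1]⟩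
  have hnotall : ¬ ∀ n ≤ K, (mirrorF π)^[n] x ∈ phaseSpace d M N := by
    intro hall
    have hcyc : ∀ i j, i < j → j ≤ K → (mirrorF π)^[i] x = (mirrorF π)^[j] x → False := by
      intro i j hij hjK heq
      have hm : x = (mirrorF π)^[j - i] x := by
        have h2 : (mirrorF π)^[i] ((mirrorF π)^[j - i] x) = (mirrorF π)^[i] x := by
          rw [← Function.iterate_add_apply, (by omega : i + (j - i) = j)]
          exact heq.symm
        exact (((mirrorF_inj π).iterate i) h2).symm
      set m := j - i with hm'
      have hm1 : 1 ≤ m := by omega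
      set y := (mirrorF π)^[m - 1] x with hy'
      have hyph : y ∈ phaseSpace d M N := hall _ (by omega)
      obtain ⟨hy1, hy2⟩ := hyph
      have hFy : mirrorF π y = x := by
        have hit : (mirrorF π)^[m] x = mirrorF π ((mirrorF π)^[m - 1] x) := by
          conv_lhs => rw [show m = (m - 1) + 1 by omega]
          rw [Function.iterate_succ_apply']
        rw [hy', ← hit]
        exact hm.symm
      have hv : π y.1 y.2 = x.2 := congrArg Prod.snd hFy
      have hq : velMove y.1 (π y.1 y.2) = x.1 := congrArg Prod.fst hFy
      rw [hv] at hq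
      rcases hx with h | h
      · rw [h.2] at hq
        have hfst : y.1.1 + 1 = x.1.1 := by
          have := congrArg Prod.fst hq
          simpa [velMove, velPlus, bsign] using this
        rw [h.1] at hfst
        omega
      · rw [h.2] at hq
        have hfst : y.1.1 + -1 = x.1.1 := by
          have := congrArg Prod.fst hq
          simpa [velMove, velMinus, bsign] using this
        rw [h.1] at hfst
        omega
    set T : Finset (MirrorPos d M × MirrorVel d) :=
      ((Finset.Icc (1 : ℤ) (N : ℤ)) ×ˢ (Finset.univ : Finset (Fin (d - 1) → ZMod M))) ×ˢ
        (Finset.univ : Finset (MirrorVel d)) with hTdef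
    have hcardT : T.card = K := by
      have hd1 : d - 1 + 1 = d := by omega
      rw [hTdef, Finset.card_product, Finset.card_product, Int.card_Icc]
      simp only [Finset.card_univ, Fintype.card_fun, ZMod.card, Fintype.card_fin,
        Fintype.card_prod, Fintype.card_option, Fintype.card_bool, add_sub_cancel_right,
        Int.toNat_natCast]
      rw [hd1, hKdef]
      ring
    have hmaps : ∀ n ∈ Finset.range (K + 1), (mirrorF π)^[n] x ∈ T := by
      intro n hn
      rw [Finset.mem_range] at hn
      have h := hall n (by omega)
      obtain ⟨h1, h2⟩ := h
      simp only [hTdef, Finset.mem_product, Finset.mem_Icc, Finset.mem_univ, and_true]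
      exact ⟨h1, h2⟩
    obtain ⟨i, hi, j, hj, hij, heq⟩ :=
      Finset.exists_ne_map_eq_of_card_lt_of_maps_to
        (by rw [Finset.card_range, hcardT]; omega) hmaps
    rw [Finset.mem_range] at hi hj
    rcases hij.lt_or_gt with hlt | hlt
    · exact hcyc i j hlt (by omega) heq
    · exact hcyc j i hlt (by omega) heq.symm
  push_neg at hnotall
  obtain ⟨n₁, hn₁K, hn₁⟩ := hnotall
  have hex : ∃ n, (mirrorF π)^[n] x ∉ phaseSpace d M N := ⟨n₁, hn₁⟩
  have hspec : (mirrorF π)^[Nat.find hex] x ∉ phaseSpace d M N := Nat.find_spec hex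
  set n₀ := Nat.find hex with hn₀def
  have hle : n₀ ≤ n₁ := Nat.find_le hn₁
  have hprev : ∀ k < n₀, (mirrorF π)^[k] x ∈ phaseSpace d M N := by
    intro k hk
    exact not_not.mp (Nat.find_min hex hk)
  have hpos : 1 ≤ n₀ := by
    rcases Nat.eq_zero_or_pos n₀ with h0 | h0
    · rw [h0] at hspec
      simp only [Function.iterate_zero, id_eq] at hspec
      exact absurd hx0 hspec
    · exact h0
  have hexit : (mirrorF π)^[n₀] x ∈ outPlus d M N ∪ outMinus d M N := by
    have hyph := hprev (n₀ - 1) (by omega)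
    set y := (mirrorF π)^[n₀ - 1] x with hy'
    obtain ⟨hy1, hy2⟩ := hyph
    have hstep : (mirrorF π)^[n₀] x = mirrorF π y := by
      rw [hy']
      conv_lhs => rw [show n₀ = (n₀ - 1) + 1 by omega]
      rw [Function.iterate_succ_apply']
    rw [hstep] at hspec ⊢
    rcases hveq : π y.1 y.2 with ⟨o, s⟩
    cases o with
    | some j =>
      exfalso
      apply hspec
      simp only [mirrorF, hveq, velMove_some]
      exact ⟨hy1, hy2⟩
    | none =>
      simp only [mirrorF, hveq, velMove_none] at hspec ⊢
      simp only [phaseSpace, slab, Set.mem_setOf_eq, not_and, not_le] at hspec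
      cases s with
      | true =>
        rw [bsign_true] at hspec ⊢
        refine Or.inl ⟨?_, rfl⟩
        show y.1.1 + 1 = (N : ℤ) + 1
        have := hspec (by omega)
        omega
      | false =>
        rw [bsign_false] at hspec ⊢
        refine Or.inr ⟨?_, rfl⟩
        show y.1.1 + -1 = 0
        by_cases hc : (1 : ℤ) ≤ y.1.1 + -1
        · have := hspec hc
          omega
        · omega
  have hmem : n₀ ∈ {n | 1 ≤ n ∧ (mirrorF π)^[n] x ∈ outPlus d M N ∪ outMinus d M N} :=
    ⟨hpos, hexit⟩
  have hne : {n | 1 ≤ n ∧ (mirrorF π)^[n] x ∈ outPlus d M N ∪ outMinus d M N}.Nonempty :=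
    ⟨n₀, hmem⟩
  have hsmem := Nat.sInf_mem hne
  have hback : exitTime N π x =
      sInf {n | 1 ≤ n ∧ (mirrorF π)^[n] x ∈ outPlus d M N ∪ outMinus d M N} := rfl
  refine ⟨⟨n₀, hpos, by omega, hexit, hprev⟩, ?_, ?_, ?_⟩
  · rw [hback]; exact hsmem.1
  · rw [hback]; exact le_trans (Nat.sInf_le hmem) (by omega)
  · rw [hback]; exact hsmem.2
end

section
/- Define $R(q,p) = (q - p, -p)$; then $R$ maps $O_N$ bijectively onto $I_N$ and $I_N$ bijectively onto $O_N$. For every mirror configuration $\pi$ and every $x \in I_N$, the exit map satisfies $F_N(x;\pi) \in O_N$ and $F_N(R(F_N(x;\pi));\pi) = R(x)$. Consequently $F_N(\cdot;\pi)$ is a bijection from $I_N$ onto $O_N$; in particular, distinct entering states $x_1 \neq x_2$ in $I_N$ always exit at distinct points: $F_N(x_1;\pi) \neq F_N(x_2;\pi)$. -/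
/-- The time-reversal map `R(q,p) = (q - p, -p)`. -/
def timeReversal {d M : ℕ} (x : MirrorPos d M × MirrorVel d) :
    MirrorPos d M × MirrorVel d :=
  (velMove x.1 (velNeg x.2), velNeg x.2)

section MirrorAux

variable {d M N : ℕ}

lemma velNeg_invol (v : MirrorVel d) : velNeg (velNeg v) = v := by
  simp [velNeg]

lemma velMove_cancel (q : MirrorPos d M) (v : MirrorVel d) :
    velMove (velMove q v) (velNeg v) = q := by
  obtain ⟨o, s⟩ := v
  cases o with
  | none =>
    show ((q.1 + bsign s) + bsign (!s), q.2) = q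
    have h : bsign s + bsign (!s) = 0 := by cases s <;> simp [bsign]
    rw [add_assoc, h, add_zero]
  | some j =>
    show (q.1, Function.update (Function.update q.2 j (q.2 j + (bsign s : ZMod M))) j
      ((Function.update q.2 j (q.2 j + (bsign s : ZMod M))) j + (bsign (!s) : ZMod M))) = q
    have h : ((bsign s : ℤ) : ZMod M) + ((bsign (!s) : ℤ) : ZMod M) = 0 := by
      cases s <;> simp [bsign]
    rw [Function.update_self, Function.update_idem, add_assoc, h, add_zero,
      Function.update_eq_self]

lemma timeReversal_invol (x : MirrorPos d M × MirrorVel d) :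
    timeReversal (timeReversal x) = x := by
  show (velMove (velMove x.1 (velNeg x.2)) (velNeg (velNeg x.2)), velNeg (velNeg x.2)) = x
  rw [velMove_cancel, velNeg_invol]

lemma mirrorF_injective (π : MirrorPos d M → (MirrorVel d ≃ MirrorVel d)) :
    Function.Injective (mirrorF π) := by
  intro a b h
  have hv : π a.1 a.2 = π b.1 b.2 := congrArg Prod.snd h
  have hq : velMove a.1 (π a.1 a.2) = velMove b.1 (π b.1 b.2) := congrArg Prod.fst h
  rw [hv] at hq
  have hq1 : a.1 = b.1 := by
    have := congrArg (fun z => velMove z (velNeg (π b.1 b.2))) hq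
    simpa [velMove_cancel] using this
  rw [hq1] at hv
  exact Prod.ext hq1 ((π b.1).injective hv)

lemma pre_of_mirrorF {π : MirrorPos d M → (MirrorVel d ≃ MirrorVel d)}
    {y x : MirrorPos d M × MirrorVel d} (h : mirrorF π y = x) :
    y.1 = velMove x.1 (velNeg x.2) := by
  have hv : π y.1 y.2 = x.2 := congrArg Prod.snd h
  have hq : velMove y.1 (π y.1 y.2) = x.1 := congrArg Prod.fst h
  rw [hv] at hq
  rw [← hq, velMove_cancel]

lemma pre_not_slab (hN : 1 ≤ N) {π : MirrorPos d M → (MirrorVel d ≃ MirrorVel d)}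
    {y x : MirrorPos d M × MirrorVel d} (hx : x ∈ inPlus d M N ∪ inMinus d M N)
    (h : mirrorF π y = x) : y.1 ∉ slab d M N := by
  have hy := pre_of_mirrorF h
  have hNZ : (1 : ℤ) ≤ N := by exact_mod_cast hN
  rcases hx with ⟨h1, h2⟩ | ⟨h1, h2⟩
  · have : y.1.1 = 0 := by
      rw [hy, h2]
      show x.1.1 + bsign (!true) = 0
      simp [bsign, h1]
    intro hs
    have h3 : (1:ℤ) ≤ y.1.1 := hs.1
    omega
  · have : y.1.1 = (N : ℤ) + 1 := by
      rw [hy, h2]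
      show x.1.1 + bsign (!false) = (N : ℤ) + 1
      simp [bsign, h1]
    intro hs
    have h3 : y.1.1 ≤ (N:ℤ) := hs.2
    omega

lemma in_sub_phase (hN : 1 ≤ N) :
    inPlus d M N ∪ inMinus d M N ⊆ phaseSpace d M N := by
  have hNZ : (1 : ℤ) ≤ N := by exact_mod_cast hN
  rintro x (⟨h1, -⟩ | ⟨h1, -⟩) <;> exact ⟨by omega, by omega⟩

lemma step_mem (π : MirrorPos d M → (MirrorVel d ≃ MirrorVel d))
    {x : MirrorPos d M × MirrorVel d} (hx : x ∈ phaseSpace d M N) :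
    mirrorF π x ∈ phaseSpace d M N ∪ (outPlus d M N ∪ outMinus d M N) := by
  obtain ⟨h1, h2⟩ := hx
  rcases hv : π x.1 x.2 with ⟨o, s⟩
  cases o with
  | none =>
    cases s with
    | true =>
      have hfst : (mirrorF π x).1.1 = x.1.1 + 1 := by
        show (velMove x.1 (π x.1 x.2)).1 = _
        rw [hv]; show x.1.1 + bsign true = _; simp [bsign]
      have hsnd : (mirrorF π x).2 = velPlus d := by
        show π x.1 x.2 = _; rw [hv]; rfl
      by_cases hend : x.1.1 = (N : ℤ)
      · exact Or.inr (Or.inl ⟨by rw [hfst, hend], hsnd⟩)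
      · exact Or.inl ⟨by omega, by omega⟩
    | false =>
      have hfst : (mirrorF π x).1.1 = x.1.1 - 1 := by
        show (velMove x.1 (π x.1 x.2)).1 = _
        rw [hv]; show x.1.1 + bsign false = _; simp [bsign]; ring
      have hsnd : (mirrorF π x).2 = velMinus d := by
        show π x.1 x.2 = _; rw [hv]; rfl
      by_cases hend : x.1.1 = 1
      · exact Or.inr (Or.inr ⟨by rw [hfst, hend]; ring, hsnd⟩)
      · exact Or.inl ⟨by omega, by omega⟩
  | some j =>
    have hfst : (mirrorF π x).1.1 = x.1.1 := by
      show (velMove x.1 (π x.1 x.2)).1 = _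
      rw [hv]; rfl
    exact Or.inl ⟨by omega, by omega⟩

lemma reversal_step {π : MirrorPos d M → (MirrorVel d ≃ MirrorVel d)}
    (hπ : IsMirrorConfig d M N π) {y : MirrorPos d M × MirrorVel d}
    (hy : y.1 ∈ slab d M N) :
    mirrorF π (timeReversal (mirrorF π y)) = timeReversal y := by
  have hrev := (hπ y.1 hy).1 y.2
  show mirrorF π (velMove (velMove y.1 (π y.1 y.2)) (velNeg (π y.1 y.2)),
    velNeg (π y.1 y.2)) = _
  rw [velMove_cancel]
  show (velMove y.1 (π y.1 (velNeg (π y.1 y.2))), π y.1 (velNeg (π y.1 y.2))) = _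
  rw [hrev]
  rfl

lemma R_O_to_I :
    Set.MapsTo (timeReversal (d := d) (M := M)) (outPlus d M N ∪ outMinus d M N)
      (inPlus d M N ∪ inMinus d M N) := by
  rintro x (⟨h1, h2⟩ | ⟨h1, h2⟩)
  · refine Or.inr ⟨?_, ?_⟩
    · show (velMove x.1 (velNeg x.2)).1 = (N : ℤ)
      rw [h2]; show x.1.1 + bsign (!true) = (N : ℤ); simp [bsign, h1]
    · show velNeg x.2 = _; rw [h2]; rfl
  · refine Or.inl ⟨?_, ?_⟩
    · show (velMove x.1 (velNeg x.2)).1 = 1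
      rw [h2]; show x.1.1 + bsign (!false) = 1; simp [bsign, h1]
    · show velNeg x.2 = _; rw [h2]; rfl

lemma R_I_to_O :
    Set.MapsTo (timeReversal (d := d) (M := M)) (inPlus d M N ∪ inMinus d M N)
      (outPlus d M N ∪ outMinus d M N) := by
  rintro x (⟨h1, h2⟩ | ⟨h1, h2⟩)
  · refine Or.inr ⟨?_, ?_⟩
    · show (velMove x.1 (velNeg x.2)).1 = 0
      rw [h2]; show x.1.1 + bsign (!true) = 0; simp [bsign, h1]
    · show velNeg x.2 = _; rw [h2]; rfl
  · refine Or.inl ⟨?_, ?_⟩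
    · show (velMove x.1 (velNeg x.2)).1 = (N : ℤ) + 1
      rw [h2]; show x.1.1 + bsign (!false) = (N : ℤ) + 1; simp [bsign, h1]
    · show velNeg x.2 = _; rw [h2]; rfl

lemma phase_finite (hM : 1 ≤ M) : (phaseSpace d M N).Finite := by
  haveI : NeZero M := ⟨by omega⟩
  have hsub : phaseSpace d M N ⊆
      ((Set.Icc (1 : ℤ) N) ×ˢ (Set.univ : Set (Fin (d - 1) → ZMod M))) ×ˢ
        (Set.univ : Set (MirrorVel d)) := by
    rintro x ⟨h1, h2⟩
    exact ⟨⟨⟨h1, h2⟩, trivial⟩, trivial⟩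
  exact Set.Finite.subset
    (((Set.finite_Icc _ _).prod Set.finite_univ).prod Set.finite_univ) hsub

lemma exit_set_nonempty (hN : 1 ≤ N) (hM : 1 ≤ M)
    (π : MirrorPos d M → (MirrorVel d ≃ MirrorVel d))
    {x : MirrorPos d M × MirrorVel d} (hx : x ∈ inPlus d M N ∪ inMinus d M N) :
    {n | 1 ≤ n ∧ (mirrorF π)^[n] x ∈ outPlus d M N ∪ outMinus d M N}.Nonempty := by
  by_contra hemp
  push_neg at hemp
  rw [Set.eq_empty_iff_forall_notMem] at hemp
  have hnotO : ∀ n, 1 ≤ n → (mirrorF π)^[n] x ∉ outPlus d M N ∪ outMinus d M N := by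
    intro n hn hO
    exact hemp n ⟨hn, hO⟩
  have hphase : ∀ n, (mirrorF π)^[n] x ∈ phaseSpace d M N := by
    intro n
    induction n with
    | zero => exact in_sub_phase hN hx
    | succ k ih =>
      rw [Function.iterate_succ_apply']
      rcases step_mem π ih with h | h
      · exact h
      · exact absurd (show (mirrorF π)^[k+1] x ∈ outPlus d M N ∪ outMinus d M N by
            rw [Function.iterate_succ_apply']; exact h)
          (hnotO (k + 1) (Nat.succ_le_succ (Nat.zero_le k)))
  have hmaps : Set.MapsTo (fun n => (mirrorF π)^[n] x) Set.univ (phaseSpace d M N) :=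
    fun n _ => hphase n
  obtain ⟨a, -, b, -, hab, heq⟩ :=
    Set.infinite_univ.exists_ne_map_eq_of_mapsTo hmaps (phase_finite hM)
  have key : ∀ a b : ℕ, a < b → (mirrorF π)^[a] x = (mirrorF π)^[b] x → False := by
    intro a b hlt he
    have hba : b = a + (b - a) := by omega
    rw [hba, Function.iterate_add_apply] at he
    have hper : (mirrorF π)^[b - a] x = x :=
      ((mirrorF_injective π).iterate a he.symm)
    obtain ⟨j, hj⟩ : ∃ j, b - a = j + 1 := ⟨b - a - 1, by omega⟩
    rw [hj, Function.iterate_succ_apply'] at hper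
    exact pre_not_slab hN hx hper (hphase j)
  rcases hab.lt_or_gt with h | h
  · exact key a b h heq
  · exact key b a h heq.symm

lemma main_exit (hN : 1 ≤ N) (hM : 1 ≤ M)
    (π : MirrorPos d M → (MirrorVel d ≃ MirrorVel d))
    (hπ : IsMirrorConfig d M N π)
    {x : MirrorPos d M × MirrorVel d} (hx : x ∈ inPlus d M N ∪ inMinus d M N) :
    mirrorFN N π x ∈ outPlus d M N ∪ outMinus d M N ∧
    mirrorFN N π (timeReversal (mirrorFN N π x)) = timeReversal x := by
  set F := mirrorF π with hF
  set n := exitTime N π x with hn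
  have hSne := exit_set_nonempty hN hM π hx
  have hS : n ∈ {m | 1 ≤ m ∧ F^[m] x ∈ outPlus d M N ∪ outMinus d M N} :=
    Nat.sInf_mem hSne
  have h1n : 1 ≤ n := hS.1
  have hOn : F^[n] x ∈ outPlus d M N ∪ outMinus d M N := hS.2
  have interior : ∀ i, i < n → F^[i] x ∈ phaseSpace d M N := by
    intro i
    induction i with
    | zero => exact fun _ => in_sub_phase hN hx
    | succ k ih =>
      intro hk
      have hk' : k < n := Nat.lt_of_succ_lt hk
      rw [Function.iterate_succ_apply']
      rcases step_mem π (ih hk') with h | h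
      · exact h
      · exfalso
        have : n ≤ k + 1 := Nat.sInf_le ⟨Nat.succ_le_succ (Nat.zero_le k),
          by rw [Function.iterate_succ_apply']; exact h⟩
        omega
  have notI : ∀ i, 1 ≤ i → i < n → F^[i] x ∉ inPlus d M N ∪ inMinus d M N := by
    intro i h1 h2 hI
    obtain ⟨j, rfl⟩ : ∃ j, i = j + 1 := ⟨i - 1, by omega⟩
    have hj : F^[j] x ∈ phaseSpace d M N := interior j (by omega)
    exact pre_not_slab hN hI ((Function.iterate_succ_apply' F j x).symm) hj
  have rev : ∀ k, k ≤ n → F^[k] (timeReversal (F^[n] x)) = timeReversal (F^[n - k] x) := by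
    intro k
    induction k with
    | zero => intro _; simp
    | succ m ih =>
      intro hm
      have hm' : m ≤ n := Nat.le_of_succ_le hm
      rw [Function.iterate_succ_apply', ih hm']
      obtain ⟨j, hj⟩ : ∃ j, n - m = j + 1 := ⟨n - m - 1, by omega⟩
      have hjn : j < n := by omega
      have hjx : F^[j] x ∈ phaseSpace d M N := interior j hjn
      have hnm : n - (m + 1) = j := by omega
      rw [hj, hnm, Function.iterate_succ_apply']
      exact reversal_step hπ hjx
  have hRx : timeReversal x ∈ outPlus d M N ∪ outMinus d M N := R_I_to_O hx
  have hRn : timeReversal (F^[n] x) ∈ inPlus d M N ∪ inMinus d M N := R_O_to_I hOn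
  set x' := timeReversal (F^[n] x) with hx'
  have hnS' : n ∈ {m | 1 ≤ m ∧ F^[m] x' ∈ outPlus d M N ∪ outMinus d M N} := by
    refine ⟨h1n, ?_⟩
    rw [rev n (le_refl n)]
    simpa using hRx
  have hle : exitTime N π x' ≤ n := Nat.sInf_le hnS'
  have hmem' : exitTime N π x' ∈
      {m | 1 ≤ m ∧ F^[m] x' ∈ outPlus d M N ∪ outMinus d M N} :=
    Nat.sInf_mem ⟨n, hnS'⟩
  have heq : exitTime N π x' = n := by
    by_contra hne
    have hlt : exitTime N π x' < n := lt_of_le_of_ne hle hne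
    set m := exitTime N π x'
    have h1m : 1 ≤ m := hmem'.1
    have hO' : F^[m] x' ∈ outPlus d M N ∪ outMinus d M N := hmem'.2
    rw [rev m (le_of_lt hlt)] at hO'
    have hI' : F^[n - m] x ∈ inPlus d M N ∪ inMinus d M N := by
      have := R_O_to_I hO'
      rwa [timeReversal_invol] at this
    exact notI (n - m) (by omega) (by omega) hI'
  constructor
  · exact hOn
  · show F^[exitTime N π x'] x' = timeReversal x
    rw [heq, rev n (le_refl n)]
    simp

end MirrorAux

/-- The time-reversal map `R` exchanges `O_N` and `I_N` bijectively; for every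
mirror configuration `π` and every `x ∈ I_N` the exit map satisfies
`F_N(x;π) ∈ O_N` and `F_N(R(F_N(x;π));π) = R(x)`. Consequently `F_N(·;π)` is a
bijection from `I_N` onto `O_N`; in particular distinct entering states exit at
distinct points. -/
theorem mirrors_exit_map_bijective (d M N : ℕ) (hd : 2 ≤ d) (hM : 1 ≤ M) (hN : 1 ≤ N)
    (π : MirrorPos d M → (MirrorVel d ≃ MirrorVel d))
    (hπ : IsMirrorConfig d M N π) :
    Set.BijOn timeReversal (outPlus d M N ∪ outMinus d M N)
      (inPlus d M N ∪ inMinus d M N) ∧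
    Set.BijOn timeReversal (inPlus d M N ∪ inMinus d M N)
      (outPlus d M N ∪ outMinus d M N) ∧
    (∀ x ∈ inPlus d M N ∪ inMinus d M N,
      mirrorFN N π x ∈ outPlus d M N ∪ outMinus d M N ∧
      mirrorFN N π (timeReversal (mirrorFN N π x)) = timeReversal x) ∧
    Set.BijOn (mirrorFN N π) (inPlus d M N ∪ inMinus d M N)
      (outPlus d M N ∪ outMinus d M N) ∧
    ∀ x₁ ∈ inPlus d M N ∪ inMinus d M N, ∀ x₂ ∈ inPlus d M N ∪ inMinus d M N,
      x₁ ≠ x₂ → mirrorFN N π x₁ ≠ mirrorFN N π x₂ := by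
  have Rinj : Function.Injective (timeReversal (d := d) (M := M)) :=
    Function.LeftInverse.injective timeReversal_invol
  have main := fun {x} hx => main_exit hN hM π hπ (x := x) hx
  have hBijR1 : Set.BijOn timeReversal (outPlus d M N ∪ outMinus d M N)
      (inPlus d M N ∪ inMinus d M N) := by
    refine ⟨R_O_to_I, Rinj.injOn, ?_⟩
    intro z hz
    exact ⟨timeReversal z, R_I_to_O hz, timeReversal_invol z⟩
  have hBijR2 : Set.BijOn timeReversal (inPlus d M N ∪ inMinus d M N)
      (outPlus d M N ∪ outMinus d M N) := by
    refine ⟨R_I_to_O, Rinj.injOn, ?_⟩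
    intro z hz
    exact ⟨timeReversal z, R_O_to_I hz, timeReversal_invol z⟩
  have hInj : Set.InjOn (mirrorFN N π) (inPlus d M N ∪ inMinus d M N) := by
    intro x₁ h₁ x₂ h₂ heq
    have e1 := (main h₁).2
    have e2 := (main h₂).2
    rw [heq] at e1
    have := e1.symm.trans e2
    have := congrArg timeReversal this
    rwa [timeReversal_invol, timeReversal_invol] at this
  have hBijF : Set.BijOn (mirrorFN N π) (inPlus d M N ∪ inMinus d M N)
      (outPlus d M N ∪ outMinus d M N) := by
    refine ⟨fun x hx => (main hx).1, hInj, ?_⟩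
    intro z hz
    have hRz : timeReversal z ∈ inPlus d M N ∪ inMinus d M N := R_O_to_I hz
    have h1 := (main hRz).1
    have h2 := (main hRz).2
    rw [timeReversal_invol] at h2
    exact ⟨timeReversal (mirrorFN N π (timeReversal z)), R_O_to_I h1, h2⟩
  exact ⟨hBijR1, hBijR2, fun x hx => main hx, hBijF,
    fun x₁ h₁ x₂ h₂ hne heq => hne (hInj h₁ h₂ heq)⟩
end

section
/- Let $d \ge 2$ and $N \ge 1$ be integers and suppose $u : \{0,1,\ldots,N+1\} \times \{+,-,0\} \to \mathbb{R}$ satisfies the boundary conditions $u(N+1,+) = 1$ and $u(0,-) = 0$, together with, for every $k$ with $1 \le k \le N$: $(2d-1)\,u(k,+) = u(k+1,+) + (2d-2)\,u(k,0)$; $(2d-1)\,u(k,0) = u(k+1,+) + u(k-1,-) + (2d-3)\,u(k,0)$; and $(2d-1)\,u(k,-) = u(k-1,-) + (2d-2)\,u(k,0)$. Then $u(1,+) = \dfrac{d}{d + (d-1)N}$; equivalently, writing $\hat\kappa_0 = d/(d-1)$, the crossing probability of the kinematic non-backtracking random walk on a slab of width $N$ is $\hat C_N = u(1,+) = \hat\kappa_0/(\hat\kappa_0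 + N)$. -/
/-- Direction label for the kinematic non-backtracking random walk projected on
the slab coordinate: moving right (`plus`), moving left (`minus`), or moving in
a transverse direction (`zero`). -/
inductive NBRWDir : Type
  | plus : NBRWDir
  | minus : NBRWDir
  | zero : NBRWDir

/-- The crossing probability of the kinematic non-backtracking random walk in
dimension `d` on a slab of width `N`: if `u (k, v)` solves the harmonic
(hitting-probability) equations with absorbing boundary values `u (N+1, +) = 1`
and `u (0, -) = 0`, then `u (1, +) = d / (d + (d-1) N)`; equivalently, with
`κ̂₀ = d/(d-1)`, the crossing probability is `κ̂₀/(κ̂₀ + N)`. -/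
theorem nbrw_crossing_probability (d N : ℕ) (hd : 2 ≤ d) (hN : 1 ≤ N)
    (u : ℕ → NBRWDir → ℝ)
    (hbp : u (N + 1) NBRWDir.plus = 1)
    (hbm : u 0 NBRWDir.minus = 0)
    (hplus : ∀ k, 1 ≤ k → k ≤ N →
      (2 * (d : ℝ) - 1) * u k NBRWDir.plus =
        u (k + 1) NBRWDir.plus + (2 * (d : ℝ) - 2) * u k NBRWDir.zero)
    (hzero : ∀ k, 1 ≤ k → k ≤ N →
      (2 * (d : ℝ) - 1) * u k NBRWDir.zero =
        u (k + 1) NBRWDir.plus + u (k - 1) NBRWDir.minus +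
          (2 * (d : ℝ) - 3) * u k NBRWDir.zero)
    (hminus : ∀ k, 1 ≤ k → k ≤ N →
      (2 * (d : ℝ) - 1) * u k NBRWDir.minus =
        u (k - 1) NBRWDir.minus + (2 * (d : ℝ) - 2) * u k NBRWDir.zero) :
    u 1 NBRWDir.plus = (d : ℝ) / ((d : ℝ) + ((d : ℝ) - 1) * (N : ℝ)) ∧
      u 1 NBRWDir.plus = ((d : ℝ) / ((d : ℝ) - 1)) / ((d : ℝ) / ((d : ℝ) - 1) + (N : ℝ)) := by
  have hd2 : (2:ℝ) ≤ (d:ℝ) := by exact_mod_cast hd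
  have hNR : (1:ℝ) ≤ (N:ℝ) := by exact_mod_cast hN
  have hd0 : (d:ℝ) ≠ 0 := by linarith
  have hd1 : (d:ℝ) - 1 ≠ 0 := by linarith
  have h2d1 : (2*(d:ℝ) - 1) ≠ 0 := by linarith
  have hden : (0:ℝ) < (d:ℝ) + ((d:ℝ) - 1) * (N:ℝ) := by nlinarith
  set c : ℝ := u 1 NBRWDir.plus with hc
  -- invariant: d·u(k+1,+) = c(d + k(d-1)) and d·u(k,−) = c(d + k(d-1)) − d·c
  have key : ∀ k, k ≤ N →
      (d:ℝ) * u (k+1) NBRWDir.plus = c * ((d:ℝ) + (k:ℝ) * ((d:ℝ) - 1)) ∧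
      (d:ℝ) * u k NBRWDir.minus = c * ((d:ℝ) + (k:ℝ) * ((d:ℝ) - 1)) - (d:ℝ) * c := by
    intro k
    induction k with
    | zero =>
      intro _
      constructor
      · push_cast; ring
      · rw [hbm]; push_cast; ring
    | succ n ih =>
      intro hkn
      obtain ⟨hP, hM⟩ := ih (by omega)
      have h1 := hplus (n+1) (by omega) hkn
      have h2 := hzero (n+1) (by omega) hkn
      have h3 := hminus (n+1) (by omega) hkn
      simp only [Nat.add_sub_cancel] at h2 h3
      -- 2·Z = P₂ + M₀
      have hZ : 2 * u (n+1) NBRWDir.zero =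
          u (n+2) NBRWDir.plus + u n NBRWDir.minus := by linear_combination h2
      -- d·P₂ = (2d−1)·P₁ − (d−1)·M₀
      have hstep : (d:ℝ) * u (n+2) NBRWDir.plus =
          (2*(d:ℝ) - 1) * u (n+1) NBRWDir.plus - ((d:ℝ) - 1) * u n NBRWDir.minus := by
        linear_combination -h1 - ((d:ℝ) - 1) * hZ
      have hP' : (d:ℝ) * u (n+1+1) NBRWDir.plus =
          c * ((d:ℝ) + ((n:ℝ)+1) * ((d:ℝ) - 1)) := by
        apply mul_left_cancel₀ hd0
        show (d:ℝ) * ((d:ℝ) * u (n+2) NBRWDir.plus) = _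
        linear_combination (d:ℝ) * hstep + (2*(d:ℝ) - 1) * hP - ((d:ℝ) - 1) * hM
      -- (2d−1)·M₁ = d·M₀ + (d−1)·P₂
      have hstep2 : (2*(d:ℝ) - 1) * u (n+1) NBRWDir.minus =
          (d:ℝ) * u n NBRWDir.minus + ((d:ℝ) - 1) * u (n+2) NBRWDir.plus := by
        linear_combination h3 + ((d:ℝ) - 1) * hZ
      have hM' : (d:ℝ) * u (n+1) NBRWDir.minus =
          c * ((d:ℝ) + ((n:ℝ)+1) * ((d:ℝ) - 1)) - (d:ℝ) * c := by
        apply mul_left_cancel₀ h2d1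
        linear_combination (d:ℝ) * hstep2 + (d:ℝ) * hM + ((d:ℝ) - 1) * hP'
      constructor
      · push_cast; push_cast at hP'; linarith
      · push_cast; push_cast at hM'; linarith
  have hfin := (key N le_rfl).1
  rw [hbp, mul_one] at hfin
  have hc1 : c = (d:ℝ) / ((d:ℝ) + ((d:ℝ) - 1) * (N:ℝ)) := by
    field_simp
    linear_combination -hfin
  refine ⟨hc1, ?_⟩
  rw [hc1]
  have hpos2 : (0:ℝ) < (d:ℝ)/((d:ℝ)-1) + (N:ℝ) := by
    have : (0:ℝ) < (d:ℝ)/((d:ℝ)-1) := div_pos (by linarith) (by linarith)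
    linarith
  rw [div_eq_div_iff hden.ne' hpos2.ne']
  field_simp
end
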